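/- Let G be a finite group. An element f of ∏_{(H)} ℤ (product over conjugacy classes of subgroups) lies in the image of the mark homomorphism φ : A(G) → ∏_{(H)} ℤ if and only if for every subgroup H of G: Σ_C n_{C/H} · f(C) ≡ 0 mod |N_G(H)/H|, where the sum is over subgroups C with H ◁ C and C/H cyclic, and n_{C/H} is the number of generators of the cyclic group C/H. -/

import Mathlib

open MulAction

/-- The vector of marks of a `G`-set `X`: its `H`-component is the number of `H`-fixed
points `|X^H|`. -/
noncomputable def markVector (G : Type) [Group G] (X : Type) [MulAction G X] :
    Subgroup G → ℤ :=
  fun H => Nat.card (fixedPoints H X)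

/-- The set of mark vectors of finite `G`-sets. -/
def GSetMarks (G : Type) [Group G] : Set (Subgroup G → ℤ) :=
  {f | ∃ (X : Type) (_ : Finite X) (_ : MulAction G X), f = markVector G X}

/-- The Burnside ring `A(G)`, realized (via the injective mark homomorphism) as the
subring of `∏_{H ≤ G} ℤ` generated by the mark vectors of finite `G`-sets. -/
def BurnsideRing (G : Type) [Group G] : Subring (Subgroup G → ℤ) :=
  Subring.closure (GSetMarks G)

theorem mem_gsetMarks (G : Type) [Group G] (X : Type) [hF : Finite X] [hM : MulAction G X] :
    markVector G X ∈ GSetMarks G := ⟨X, hF, hM, rfl⟩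

/-- The class `[X] ∈ A(G)` of a finite `G`-set `X`. -/
noncomputable def burnsideMk (G : Type) [Group G] (X : Type) [Finite X] [MulAction G X] :
    BurnsideRing G :=
  ⟨markVector G X, Subring.subset_closure (mem_gsetMarks G X)⟩

/-- The mark (fixed-point) ring homomorphism `φ_H : A(G) → ℤ`. -/
noncomputable def mark (G : Type) [Group G] (H : Subgroup G) : BurnsideRing G →+* ℤ :=
  (Pi.evalRingHom (fun _ => ℤ) H).comp (BurnsideRing G).subtype

open MulAction Subgroup

variable {G : Type} [Group G] {X : Type} [MulAction G X]

lemma mem_fp_iff {K : Subgroup G} {x : X} :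
    x ∈ fixedPoints K X ↔ K ≤ stabilizer G x := by
  simp only [mem_fixedPoints, SetLike.le_def, mem_stabilizer_iff, Subtype.forall]
  rfl

lemma mem_fp_iff' {K : Subgroup G} {x : X} :
    x ∈ fixedPoints K X ↔ ∀ k ∈ K, k • x = x := by
  rw [mem_fp_iff]; rfl

lemma fp_sup_iff {H : Subgroup G} {g : G} {x : X} :
    x ∈ fixedPoints (↥(H ⊔ zpowers g)) X ↔ x ∈ fixedPoints H X ∧ g • x = x := by
  rw [mem_fp_iff, sup_le_iff, zpowers_le, mem_fp_iff, mem_stabilizer_iff]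

lemma map_conj_eq_self {H : Subgroup G} {n : G} (hn : n ∈ (Subgroup.normalizer (H : Set G))) :
    Subgroup.map (MulAut.conj n).toMonoidHom H = H := by
  ext x
  simp only [Subgroup.mem_map, MulEquiv.coe_toMonoidHom, MulAut.conj_apply]
  constructor
  · rintro ⟨h, hh, rfl⟩; exact (mem_normalizer_iff.mp hn h).mp hh
  · intro hx
    refine ⟨n⁻¹ * x * n, ?_, by group⟩
    have := (mem_normalizer_iff.mp ((Subgroup.normalizer (H : Set G)).inv_mem hn) x).mp hx
    simpa [mul_assoc] using this

lemma card_fp_conj (g : G) (K : Subgroup G) :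
    Nat.card (fixedPoints (↥(Subgroup.map (MulAut.conj g).toMonoidHom K)) X)
      = Nat.card (fixedPoints K X) := by
  apply Nat.card_congr
  refine Equiv.subtypeEquiv (MulAction.toPerm g⁻¹ : Equiv.Perm X) fun x => ?_
  show _ ↔ g⁻¹ • x ∈ fixedPoints K X
  simp only [mem_fp_iff']
  constructor
  · intro h k hk
    have h2 := h (g * k * g⁻¹) (Subgroup.mem_map.mpr ⟨k, hk, rfl⟩)
    have : (g⁻¹ * (g * k * g⁻¹)) • x = g⁻¹ • x := by rw [mul_smul, h2]
    rwa [show g⁻¹ * (g * k * g⁻¹) = k * g⁻¹ by group, mul_smul] at this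
  · intro h y hy
    rw [Subgroup.mem_map] at hy
    obtain ⟨k, hk, rfl⟩ := hy
    have h2 := h k hk
    show ((MulAut.conj g).toMonoidHom k) • x = x
    have : (MulAut.conj g).toMonoidHom k = g * k * g⁻¹ := rfl
    rw [this, mul_smul, mul_smul, h2, ← mul_smul, mul_inv_cancel, one_smul]

lemma normal_subgroupOf_of_le_norm {H K : Subgroup G} (hHK : H ≤ K) (hK : K ≤ (Subgroup.normalizer (H : Set G))) :
    (H.subgroupOf K).Normal := by
  constructor
  intro x hx k
  rw [Subgroup.mem_subgroupOf] at hx ⊢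
  exact (mem_normalizer_iff.mp (hK k.2) x).mp hx

lemma SCyc_le_norm {H C : Subgroup G} (hHC : H ≤ C) (hN : (H.subgroupOf C).Normal) :
    C ≤ (Subgroup.normalizer (H : Set G)) := by
  intro x hx
  rw [mem_normalizer_iff]
  intro h
  constructor
  · intro hh
    have := hN.conj_mem ⟨h, hHC hh⟩ (Subgroup.mem_subgroupOf.mpr hh) ⟨x, hx⟩
    rw [Subgroup.mem_subgroupOf] at this
    simpa using this
  · intro hh
    have := hN.conj_mem ⟨x * h * x⁻¹, hHC hh⟩ (Subgroup.mem_subgroupOf.mpr hh) ⟨x⁻¹, inv_mem hx⟩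
    rw [Subgroup.mem_subgroupOf] at this
    simpa [mul_assoc] using this

lemma sup_zpowers_eq_iff {H C : Subgroup G} (hHC : H ≤ C) [hn : (H.subgroupOf C).Normal]
    (x : C) :
    H ⊔ zpowers (x : G) = C ↔ zpowers (QuotientGroup.mk' (H.subgroupOf C) x) = ⊤ := by
  set π := QuotientGroup.mk' (H.subgroupOf C) with hπ
  constructor
  · intro hsup
    rw [eq_top_iff]
    rintro q -
    obtain ⟨y, rfl⟩ := QuotientGroup.mk'_surjective _ q
    have hle : H ⊔ zpowers (x : G) ≤ Subgroup.map C.subtype (Subgroup.comap π (zpowers (π x))) := by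
      apply sup_le
      · intro h hh
        exact Subgroup.mem_map.mpr ⟨⟨h, hHC hh⟩, Subgroup.mem_comap.mpr (by
          have : π ⟨h, hHC hh⟩ = 1 := (QuotientGroup.eq_one_iff _).mpr
            (Subgroup.mem_subgroupOf.mpr hh)
          rw [this]; exact one_mem _), rfl⟩
      · rw [zpowers_le]
        exact Subgroup.mem_map.mpr ⟨x, Subgroup.mem_comap.mpr (mem_zpowers _), rfl⟩
    have hy' : (y : G) ∈ H ⊔ zpowers (x : G) := by rw [hsup]; exact y.2
    have hy : (y : G) ∈ Subgroup.map C.subtype (Subgroup.comap π (zpowers (π x))) := hle hy'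
    obtain ⟨z, hz, hzy⟩ := Subgroup.mem_map.mp hy
    have hzz : z = y := Subtype.ext hzy
    subst hzz
    exact Subgroup.mem_comap.mp hz
  · intro htop
    apply le_antisymm (sup_le hHC (zpowers_le.mpr x.2))
    intro y hy
    have hmem : π ⟨y, hy⟩ ∈ zpowers (π x) := htop ▸ mem_top _
    obtain ⟨k, hk⟩ := mem_zpowers_iff.mp hmem
    rw [← map_zpow] at hk
    have hker : ((x ^ k)⁻¹ * ⟨y, hy⟩ : C) ∈ H.subgroupOf C := by
      have : (QuotientGroup.mk (x ^ k) : C ⧸ H.subgroupOf C) = QuotientGroup.mk ⟨y, hy⟩ := hk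
      rwa [QuotientGroup.eq] at this
    have hdecomp : y = ((x : G) ^ k) * ↑((x ^ k)⁻¹ * ⟨y, hy⟩ : C) := by
      push_cast
      group
    rw [hdecomp]
    exact mul_mem (Subgroup.mem_sup_right (zpow_mem (mem_zpowers _) k))
      (Subgroup.mem_sup_left (Subgroup.mem_subgroupOf.mp hker))

lemma card_gens {Q : Type*} [Group Q] [Finite Q] (g : Q) (hg : zpowers g = ⊤) :
    Nat.card {q : Q // zpowers q = ⊤} = Nat.totient (Nat.card Q) := by
  have hcyc : IsCyclic Q := ⟨⟨g, fun x => by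
    have : x ∈ (⊤ : Subgroup Q) := trivial
    rw [← hg] at this; exact this⟩⟩
  let _ : Fintype Q := Fintype.ofFinite Q
  classical
  rw [Nat.card_eq_fintype_card, Fintype.card_subtype, Nat.card_eq_fintype_card]
  have key : ∀ q : Q, zpowers q = ⊤ ↔ orderOf q = Fintype.card Q := fun q => by
    constructor
    · intro h
      have := orderOf_eq_card_of_forall_mem_zpowers
        (fun x : Q => by rw [← SetLike.mem_coe, h]; trivial)
      rwa [Nat.card_eq_fintype_card] at this
    · intro h
      exact Subgroup.eq_top_of_card_eq _ (by rw [Nat.card_zpowers, h, Nat.card_eq_fintype_card])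
  simp_rw [key]
  exact IsCyclic.card_orderOf_eq_totient (dvd_refl _)

def SCyc (G : Type) [Group G] (H : Subgroup G) : Set (Subgroup G) :=
  {C : Subgroup G | H ≤ C ∧ (H.subgroupOf C).Normal ∧ ∃ c ∈ C, C = H ⊔ Subgroup.zpowers c}

lemma self_mem_SCyc {G : Type} [Group G] (H : Subgroup G) : H ∈ SCyc G H := by
  refine ⟨le_rfl, ?_, 1, H.one_mem, by simp⟩
  rw [subgroupOf_self]
  infer_instance

lemma fiber_card {G : Type} [Group G] [Finite G] {H C : Subgroup G} (hC : C ∈ SCyc G H) :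
    Nat.card {n : (Subgroup.normalizer (H : Set G)) // H ⊔ zpowers (n : G) = C} =
      Nat.card H * Nat.totient (H.relIndex C) := by
  obtain ⟨hHC, hn, c, hcC, hsup⟩ := hC
  haveI := hn
  have hCN : C ≤ (Subgroup.normalizer (H : Set G)) := SCyc_le_norm hHC hn
  set π := QuotientGroup.mk' (H.subgroupOf C) with hπ
  have e1 : {n : (Subgroup.normalizer (H : Set G)) // H ⊔ zpowers (n : G) = C} ≃
      {x : C // H ⊔ zpowers (x : G) = C} :=
    { toFun := fun n => ⟨⟨(n : (Subgroup.normalizer (H : Set G))), by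
        have h2 : ((n : (Subgroup.normalizer (H : Set G))) : G) ∈ H ⊔ zpowers ((n : (Subgroup.normalizer (H : Set G))) : G) :=
          Subgroup.mem_sup_right (mem_zpowers _)
        rwa [n.2] at h2⟩, n.2⟩
      invFun := fun x => ⟨⟨(x : C), hCN (x : C).2⟩, x.2⟩
      left_inv := fun n => Subtype.ext (Subtype.ext rfl)
      right_inv := fun x => Subtype.ext (Subtype.ext rfl) }
  have e2 : {x : C // H ⊔ zpowers (x : G) = C} ≃ {x : C // zpowers (π x) = ⊤} :=
    Equiv.subtypeEquivRight (fun x => sup_zpowers_eq_iff hHC x)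
  have e3 : {x : C // zpowers (π x) = ⊤} ≃
      (QuotientGroup.mk ⁻¹' {q : C ⧸ H.subgroupOf C | zpowers q = ⊤} : Set C) :=
    Equiv.subtypeEquivRight (fun x => Iff.rfl)
  have e4 := QuotientGroup.preimageMkEquivSubgroupProdSet (H.subgroupOf C)
      {q : C ⧸ H.subgroupOf C | zpowers q = ⊤}
  rw [Nat.card_congr (((e1.trans e2).trans e3).trans e4), Nat.card_prod]
  congr 1
  · exact Nat.card_congr (Subgroup.subgroupOfEquivOfLe hHC).toEquiv
  · have hgen : zpowers (π ⟨c, hcC⟩) = ⊤ :=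
      (sup_zpowers_eq_iff hHC ⟨c, hcC⟩).mp hsup.symm
    have := card_gens _ hgen
    rw [show ({q : C ⧸ H.subgroupOf C | zpowers q = ⊤} : Set _) =
      (setOf fun q => zpowers q = ⊤) from rfl]
    rw [show Nat.card (setOf fun q : C ⧸ H.subgroupOf C => zpowers q = ⊤) =
      Nat.card {q : C ⧸ H.subgroupOf C // zpowers q = ⊤} from rfl, this]
    congr 1

theorem gset_dvd (G : Type) [Group G] [Finite G] (X : Type) [Finite X] [MulAction G X]
    (H : Subgroup G) :
    (Nat.card ((Subgroup.normalizer (H : Set G)) ⧸ H.subgroupOf (Subgroup.normalizer (H : Set G))) : ℤ) ∣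
      ∑ᶠ C ∈ SCyc G H, (Nat.totient (H.relIndex C) : ℤ) * markVector G X C := by
  classical
  set N := (Subgroup.normalizer (H : Set G)) with hN
  letI act : MulAction N (fixedPoints H X) :=
    { smul := fun n x => ⟨(n : G) • (x : X), by
        rw [mem_fp_iff, stabilizer_smul_eq_stabilizer_map_conj]
        calc H = Subgroup.map (MulAut.conj (n : G)).toMonoidHom H :=
              (map_conj_eq_self n.2).symm
          _ ≤ _ := Subgroup.map_mono (mem_fp_iff.mp x.2)⟩
      one_smul := fun x => Subtype.ext (by
        show ((1 : N) : G) • (x : X) = (x : X); simp)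
      mul_smul := fun a b x => Subtype.ext (by
        show ((a * b : N) : G) • (x : X) = (a : G) • ((b : G) • (x : X))
        rw [Subgroup.coe_mul, mul_smul]) }
  letI : Fintype N := Fintype.ofFinite N
  letI : Fintype (fixedPoints H X) := Fintype.ofFinite _
  letI : ∀ n : N, Fintype (fixedBy (fixedPoints H X) n) := fun n => Fintype.ofFinite _
  letI : Fintype (orbitRel.Quotient N (fixedPoints H X)) := Fintype.ofFinite _
  have hBurn := MulAction.sum_card_fixedBy_eq_card_orbits_mul_card_group N (fixedPoints H X)
  -- identify fixedBy with fixed points of the sup subgroup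
  have hfix : ∀ n : N, Fintype.card (fixedBy (fixedPoints H X) n) =
      Nat.card (fixedPoints (↥(H ⊔ zpowers (n : G))) X) := by
    intro n
    rw [← Nat.card_eq_fintype_card]
    apply Nat.card_congr
    exact
      { toFun := fun z => ⟨((z : fixedPoints H X) : X),
          fp_sup_iff.mpr ⟨(z : fixedPoints H X).2, congrArg Subtype.val z.2⟩⟩
        invFun := fun w => ⟨⟨(w : X), (fp_sup_iff.mp w.2).1⟩,
          Subtype.ext (fp_sup_iff.mp w.2).2⟩
        left_inv := fun z => Subtype.ext (Subtype.ext rfl)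
        right_inv := fun w => Subtype.ext rfl }
  set SF : Finset (Subgroup G) := (Set.toFinite (SCyc G H)).toFinset with hSF
  have hmaps : ∀ n : N, n ∈ (Finset.univ : Finset N) →
      (H ⊔ zpowers (n : G)) ∈ SF := by
    intro n _
    rw [hSF, Set.Finite.mem_toFinset]
    have hsupN : H ⊔ zpowers (n : G) ≤ N := sup_le le_normalizer (zpowers_le.mpr n.2)
    exact ⟨le_sup_left, normal_subgroupOf_of_le_norm le_sup_left hsupN,
      n, Subgroup.mem_sup_right (mem_zpowers _), rfl⟩
  have key := Finset.sum_fiberwise_of_maps_to' hmaps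
      (fun C : Subgroup G => Nat.card (fixedPoints C X))
  -- compute inner sums
  have inner : ∀ C ∈ SF, (∑ n ∈ Finset.univ.filter
        (fun n : N => H ⊔ zpowers (n : G) = C), Nat.card (fixedPoints C X)) =
      (Nat.card H * Nat.totient (H.relIndex C)) * Nat.card (fixedPoints C X) := by
    intro C hC
    rw [Finset.sum_const, smul_eq_mul]
    congr 1
    rw [← fiber_card (by rwa [hSF, Set.Finite.mem_toFinset] at hC)]
    rw [Nat.card_eq_fintype_card, Fintype.card_subtype]
  have hsum : ∑ C ∈ SF, (Nat.card H * Nat.totient (H.relIndex C)) * Nat.card (fixedPoints C X)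
      = Fintype.card (orbitRel.Quotient N (fixedPoints H X)) * Fintype.card N := by
    rw [← Finset.sum_congr rfl inner, key, ← hBurn]
    exact Finset.sum_congr rfl fun n _ => (hfix n).symm
  -- extract the subgroup card factor
  have hfactor : ∑ C ∈ SF, (Nat.card H * Nat.totient (H.relIndex C)) * Nat.card (fixedPoints C X)
      = Nat.card H * ∑ C ∈ SF, Nat.totient (H.relIndex C) * Nat.card (fixedPoints C X) := by
    rw [Finset.mul_sum]
    exact Finset.sum_congr rfl fun C _ => by ring
  have hNcard : Fintype.card N = Nat.card (N ⧸ H.subgroupOf N) * Nat.card H := by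
    rw [← Nat.card_eq_fintype_card, card_eq_card_quotient_mul_card_subgroup (H.subgroupOf N)]
    congr 1
    exact Nat.card_congr (Subgroup.subgroupOfEquivOfLe le_normalizer).toEquiv
  have hHpos : 0 < Nat.card H := Nat.card_pos
  have hT : (∑ C ∈ SF, Nat.totient (H.relIndex C) * Nat.card (fixedPoints C X))
      = Fintype.card (orbitRel.Quotient N (fixedPoints H X)) * Nat.card (N ⧸ H.subgroupOf N) := by
    apply Nat.eq_of_mul_eq_mul_left hHpos
    rw [← hfactor, hsum, hNcard]
    ring
  have hfin : ∑ᶠ C ∈ SCyc G H, (Nat.totient (H.relIndex C) : ℤ) * markVector G X C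
      = ((∑ C ∈ SF, Nat.totient (H.relIndex C) * Nat.card (fixedPoints C X) : ℕ) : ℤ) := by
    rw [← Set.Finite.coe_toFinset (Set.toFinite (SCyc G H)), finsum_mem_coe_finset]
    push_cast
    rfl
  rw [hfin, hT]
  exact ⟨Fintype.card (orbitRel.Quotient N (fixedPoints H X)), by push_cast; ring⟩

lemma gsetMarks_one (G : Type) [Group G] : (1 : Subgroup G → ℤ) ∈ GSetMarks G := by
  refine ⟨PUnit, inferInstance, inferInstance, funext fun K => ?_⟩
  have h1 : fixedPoints K PUnit = Set.univ := by
    ext x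
    simp only [Set.mem_univ, iff_true, mem_fixedPoints]
    exact fun _ => trivial
  show (1 : ℤ) = (Nat.card (fixedPoints K PUnit) : ℤ)
  rw [h1]
  simp

lemma gsetMarks_mul (G : Type) [Group G] {a b : Subgroup G → ℤ}
    (ha : a ∈ GSetMarks G) (hb : b ∈ GSetMarks G) : a * b ∈ GSetMarks G := by
  obtain ⟨X, hFX, hMX, rfl⟩ := ha
  obtain ⟨Y, hFY, hMY, rfl⟩ := hb
  refine ⟨X × Y, inferInstance, inferInstance, funext fun K => ?_⟩
  show markVector G X K * markVector G Y K = (Nat.card (fixedPoints K (X × Y)) : ℤ)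
  have h1 : fixedPoints K (X × Y) = (fixedPoints K X) ×ˢ (fixedPoints K Y) := by
    ext p
    simp only [mem_fixedPoints, Set.mem_prod]
    constructor
    · intro h
      exact ⟨fun m => congrArg Prod.fst (h m), fun m => congrArg Prod.snd (h m)⟩
    · intro h m
      exact Prod.ext (h.1 m) (h.2 m)
  rw [h1, show Nat.card ((fixedPoints K X) ×ˢ (fixedPoints K Y) : Set (X × Y))
    = Nat.card ((fixedPoints K X) × (fixedPoints K Y)) from
      Nat.card_congr (Equiv.Set.prod _ _), Nat.card_prod]
  push_cast
  rfl

lemma finsum_SCyc {G : Type} [Group G] [Finite G] (H : Subgroup G) (g : Subgroup G → ℤ) :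
    ∑ᶠ C ∈ SCyc G H, g C = ∑ C ∈ (Set.toFinite (SCyc G H)).toFinset, g C := by
  rw [← Set.Finite.coe_toFinset (Set.toFinite (SCyc G H)), finsum_mem_coe_finset]
  simp

theorem forward_dvd (G : Type) [Group G] [Finite G] {f : Subgroup G → ℤ}
    (hf : f ∈ BurnsideRing G) (H : Subgroup G) :
    (Nat.card ((Subgroup.normalizer (H : Set G)) ⧸ H.subgroupOf (Subgroup.normalizer (H : Set G))) : ℤ) ∣
      ∑ᶠ C ∈ SCyc G H, (Nat.totient (H.relIndex C) : ℤ) * f C := by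
  rw [BurnsideRing, Subring.mem_closure_iff] at hf
  induction hf using AddSubgroup.closure_induction with
  | mem a ha =>
    have haG : a ∈ GSetMarks G := by
      induction ha using Submonoid.closure_induction with
      | mem b hb => exact hb
      | one => exact gsetMarks_one G
      | mul x y _ _ hx hy => exact gsetMarks_mul G hx hy
    obtain ⟨X, hFX, hMX, rfl⟩ := haG
    exact gset_dvd G X H
  | zero =>
    rw [finsum_SCyc]
    simp
  | add a b _ _ ha hb =>
    rw [finsum_SCyc] at ha hb ⊢
    have : ∑ C ∈ (Set.toFinite (SCyc G H)).toFinset,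
        (Nat.totient (H.relIndex C) : ℤ) * (a + b) C
        = (∑ C ∈ (Set.toFinite (SCyc G H)).toFinset, (Nat.totient (H.relIndex C) : ℤ) * a C)
          + ∑ C ∈ (Set.toFinite (SCyc G H)).toFinset, (Nat.totient (H.relIndex C) : ℤ) * b C := by
      rw [← Finset.sum_add_distrib]
      exact Finset.sum_congr rfl fun C _ => by simp [mul_add]
    rw [this]
    exact dvd_add ha hb
  | neg a _ ha =>
    rw [finsum_SCyc] at ha ⊢
    have : ∑ C ∈ (Set.toFinite (SCyc G H)).toFinset,
        (Nat.totient (H.relIndex C) : ℤ) * (-a) C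
        = -∑ C ∈ (Set.toFinite (SCyc G H)).toFinset, (Nat.totient (H.relIndex C) : ℤ) * a C := by
      rw [← Finset.sum_neg_distrib]
      exact Finset.sum_congr rfl fun C _ => by simp
    rw [this]
    exact dvd_neg.mpr ha

lemma fp_coset_subconj {G : Type} [Group G] {K L : Subgroup G}
    (h : (fixedPoints L (G ⧸ K)).Nonempty) :
    ∃ g : G, Subgroup.map (MulAut.conj g).toMonoidHom L ≤ K := by
  obtain ⟨x, hx⟩ := h
  obtain ⟨g, rfl⟩ := QuotientGroup.mk_surjective x
  refine ⟨g⁻¹, ?_⟩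
  intro y hy
  rw [Subgroup.mem_map] at hy
  obtain ⟨l, hl, rfl⟩ := hy
  have h2 : (l : G) • (QuotientGroup.mk g : G ⧸ K) = QuotientGroup.mk g :=
    mem_fp_iff'.mp hx l hl
  rw [MulAction.Quotient.smul_mk, QuotientGroup.eq] at h2
  have h3 := inv_mem h2
  show g⁻¹ * l * g⁻¹⁻¹ ∈ K
  simpa [mul_assoc, smul_eq_mul, mul_inv_rev] using h3

lemma mark_coset_self {G : Type} [Group G] [Finite G] (H : Subgroup G) :
    markVector G (G ⧸ H) H = (Nat.card ((Subgroup.normalizer (H : Set G)) ⧸ H.subgroupOf (Subgroup.normalizer (H : Set G))) : ℤ) := by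
  show ((Nat.card (fixedPoints H (G ⧸ H)) : ℕ) : ℤ) = _
  congr 1
  exact Nat.card_congr (Sylow.fixedPointsMulLeftCosetsEquivQuotient H)

noncomputable def mu (G : Type) [Group G] [Finite G] (f : Subgroup G → ℤ) : ℕ :=
  letI := Fintype.ofFinite (Subgroup G)
  ∑ K : Subgroup G, (if f K = 0 then 0 else (Nat.card (Subgroup G) + 1) ^ (Nat.card K))

lemma mu_lt {G : Type} [Group G] [Finite G] {f g : Subgroup G → ℤ} {H : Subgroup G}
    (hfH : f H ≠ 0) (hgH : g H = 0)
    (hnew : ∀ K, f K = 0 → g K ≠ 0 → Nat.card K < Nat.card H) :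
    mu G g < mu G f := by
  classical
  letI := Fintype.ofFinite (Subgroup G)
  unfold mu
  set B := Nat.card (Subgroup G) + 1 with hB
  have hterm : ∀ K : Subgroup G,
      (if g K = 0 then 0 else B ^ Nat.card K) + (if K = H then B ^ Nat.card H else 0)
      ≤ (if f K = 0 then 0 else B ^ Nat.card K)
        + (if f K = 0 ∧ g K ≠ 0 then B ^ Nat.card K else 0) := by
    intro K
    by_cases hKH : K = H
    · subst hKH
      simp [hgH, hfH]
    · simp only [if_neg hKH, add_zero]
      by_cases hgK : g K = 0
      · simp [hgK]
      · rw [if_neg hgK]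
        by_cases hfK : f K = 0
        · simp [hfK, hgK]
        · simp [hfK]
  have hsum := Finset.sum_le_sum (fun K (_ : K ∈ Finset.univ) => hterm K)
  rw [Finset.sum_add_distrib, Finset.sum_add_distrib, Finset.sum_ite_eq' Finset.univ H
    (fun _ => B ^ Nat.card H)] at hsum
  simp only [Finset.mem_univ, if_true] at hsum
  have hA : (∑ K : Subgroup G, if f K = 0 ∧ g K ≠ 0 then B ^ Nat.card K else 0)
      < B ^ Nat.card H := by
    have h1 : ∀ K : Subgroup G, (if f K = 0 ∧ g K ≠ 0 then B ^ Nat.card K else 0)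
        ≤ (if f K = 0 ∧ g K ≠ 0 then B ^ (Nat.card H - 1) else 0) := by
      intro K
      by_cases hK : f K = 0 ∧ g K ≠ 0
      · rw [if_pos hK, if_pos hK]
        apply Nat.pow_le_pow_right (Nat.succ_le_succ (Nat.zero_le _))
        exact Nat.le_sub_one_of_lt (hnew K hK.1 hK.2)
      · simp [hK]
    calc (∑ K : Subgroup G, if f K = 0 ∧ g K ≠ 0 then B ^ Nat.card K else 0)
        ≤ ∑ K : Subgroup G, (if f K = 0 ∧ g K ≠ 0 then B ^ (Nat.card H - 1) else 0) :=
          Finset.sum_le_sum (fun K _ => h1 K)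
      _ ≤ ∑ _K : Subgroup G, B ^ (Nat.card H - 1) :=
          Finset.sum_le_sum (fun K _ => by split <;> simp)
      _ = Fintype.card (Subgroup G) * B ^ (Nat.card H - 1) := by
          rw [Finset.sum_const, smul_eq_mul, Finset.card_univ]
      _ < B * B ^ (Nat.card H - 1) := by
          have hlt : Fintype.card (Subgroup G) < B := by
            rw [hB, ← Nat.card_eq_fintype_card]; omega
          exact Nat.mul_lt_mul_of_lt_of_le hlt le_rfl
            (Nat.pow_pos (Nat.succ_pos _))
      _ = B ^ (Nat.card H - 1 + 1) := by rw [pow_succ]; ring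
      _ = B ^ Nat.card H := by
          congr 1
          have : 0 < Nat.card H := Nat.card_pos
          omega
  omega

theorem backward_aux (G : Type) [Group G] [Finite G] (n : ℕ) :
    ∀ f : Subgroup G → ℤ, mu G f ≤ n →
    (∀ (g : G) (H : Subgroup G), f (Subgroup.map (MulAut.conj g).toMonoidHom H) = f H) →
    (∀ H : Subgroup G, (Nat.card ((Subgroup.normalizer (H : Set G)) ⧸ H.subgroupOf (Subgroup.normalizer (H : Set G))) : ℤ) ∣
        ∑ᶠ C ∈ SCyc G H, (Nat.totient (H.relIndex C) : ℤ) * f C) →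
    f ∈ BurnsideRing G := by
  induction n using Nat.strong_induction_on with
  | _ n IH =>
  intro f hmu hconj hcong
  classical
  by_cases hf0 : ∀ K, f K = 0
  · have : f = 0 := funext hf0
    rw [this]
    exact zero_mem _
  push_neg at hf0
  letI := Fintype.ofFinite (Subgroup G)
  -- pick H with f H ≠ 0 of maximal cardinality
  have hne : (Finset.univ.filter (fun K : Subgroup G => f K ≠ 0)).Nonempty := by
    obtain ⟨K₀, hK₀⟩ := hf0
    exact ⟨K₀, by simp [hK₀]⟩
  obtain ⟨H, hHmem, hmax⟩ := Finset.exists_max_image _ (fun K : Subgroup G => Nat.card K) hne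
  rw [Finset.mem_filter] at hHmem
  have hfH : f H ≠ 0 := hHmem.2
  have hmax' : ∀ K : Subgroup G, f K ≠ 0 → Nat.card K ≤ Nat.card H := by
    intro K hK
    exact hmax K (by simp [hK])
  -- the congruence at H reduces to f H
  have hsum : ∑ᶠ C ∈ SCyc G H, (Nat.totient (H.relIndex C) : ℤ) * f C = f H := by
    rw [finsum_SCyc]
    rw [Finset.sum_eq_single H]
    · rw [Subgroup.relIndex_self, Nat.totient_one]
      simp
    · intro C hC hne'
      have hC' : C ∈ SCyc G H := by rwa [Set.Finite.mem_toFinset] at hC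
      have hfC : f C = 0 := by
        by_contra hfC
        have h1 : Nat.card C ≤ Nat.card H := hmax' C hfC
        have h2 : H = C := Subgroup.eq_of_le_of_card_ge hC'.1 h1
        exact hne' h2.symm
      rw [hfC, mul_zero]
    · intro hH
      exact absurd ((Set.Finite.mem_toFinset _).mpr (self_mem_SCyc H)) hH
  have hdvd : (Nat.card ((Subgroup.normalizer (H : Set G)) ⧸ H.subgroupOf (Subgroup.normalizer (H : Set G))) : ℤ) ∣ f H := by
    rw [← hsum]; exact hcong H
  obtain ⟨m, hm⟩ := hdvd
  set v := markVector G (G ⧸ H) with hv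
  have hvmem : v ∈ BurnsideRing G :=
    Subring.subset_closure ⟨G ⧸ H, inferInstance, inferInstance, rfl⟩
  set g := f - m • v with hg
  have hgval : ∀ K, g K = f K - m * v K := fun K => rfl
  have hvconj : ∀ (γ : G) (K : Subgroup G),
      v (Subgroup.map (MulAut.conj γ).toMonoidHom K) = v K := by
    intro γ K
    show ((Nat.card _ : ℕ) : ℤ) = ((Nat.card _ : ℕ) : ℤ)
    rw [card_fp_conj]
  have hgconj : ∀ (γ : G) (K : Subgroup G),
      g (Subgroup.map (MulAut.conj γ).toMonoidHom K) = g K := by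
    intro γ K
    rw [hgval, hgval, hconj, hvconj]
  have hgcong : ∀ K : Subgroup G,
      (Nat.card ((Subgroup.normalizer (K : Set G)) ⧸ K.subgroupOf (Subgroup.normalizer (K : Set G))) : ℤ) ∣
        ∑ᶠ C ∈ SCyc G K, (Nat.totient (K.relIndex C) : ℤ) * g C := by
    intro K
    have hfK := hcong K
    have hvK : (Nat.card ((Subgroup.normalizer (K : Set G)) ⧸ K.subgroupOf (Subgroup.normalizer (K : Set G))) : ℤ) ∣
        ∑ᶠ C ∈ SCyc G K, (Nat.totient (K.relIndex C) : ℤ) * v C := gset_dvd G (G ⧸ H) K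
    rw [finsum_SCyc] at hfK hvK ⊢
    have hsplit : ∑ C ∈ (Set.toFinite (SCyc G K)).toFinset, (Nat.totient (K.relIndex C) : ℤ) * g C
        = (∑ C ∈ (Set.toFinite (SCyc G K)).toFinset, (Nat.totient (K.relIndex C) : ℤ) * f C)
          - m * ∑ C ∈ (Set.toFinite (SCyc G K)).toFinset,
              (Nat.totient (K.relIndex C) : ℤ) * v C := by
      rw [Finset.mul_sum, ← Finset.sum_sub_distrib]
      exact Finset.sum_congr rfl fun C _ => by rw [hgval]; ring
    rw [hsplit]
    exact dvd_sub hfK (Dvd.dvd.mul_left hvK m)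
  have hvH : v H = (Nat.card ((Subgroup.normalizer (H : Set G)) ⧸ H.subgroupOf (Subgroup.normalizer (H : Set G))) : ℤ) := mark_coset_self H
  have hgH : g H = 0 := by rw [hgval, hvH, hm]; ring
  have hnew : ∀ K, f K = 0 → g K ≠ 0 → Nat.card K < Nat.card H := by
    intro K hfK hgK
    have hvK : v K ≠ 0 := by
      intro h0
      apply hgK
      rw [hgval, hfK, h0]
      ring
    have hnon : (fixedPoints K (G ⧸ H)).Nonempty := by
      rcases Set.eq_empty_or_nonempty (fixedPoints K (G ⧸ H)) with h | h
      · exfalso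
        apply hvK
        show ((Nat.card (fixedPoints K (G ⧸ H)) : ℕ) : ℤ) = 0
        rw [h]
        simp
      · exact h
    obtain ⟨γ, hγ⟩ := fp_coset_subconj hnon
    have hcardmap : Nat.card (Subgroup.map (MulAut.conj γ).toMonoidHom K) = Nat.card K :=
      (Nat.card_congr (Subgroup.equivMapOfInjective K _ (MulAut.conj γ).injective).toEquiv).symm
    have hle : Nat.card K ≤ Nat.card H := by
      rw [← hcardmap]
      exact Subgroup.card_le_of_le hγ
    rcases lt_or_eq_of_le hle with h | h
    · exact h
    · exfalso
      have heq : Subgroup.map (MulAut.conj γ).toMonoidHom K = H :=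
        Subgroup.eq_of_le_of_card_ge hγ (by rw [hcardmap, h])
      apply hgK
      rw [← hgconj γ K, heq, hgH]
  have hlt : mu G g < mu G f := mu_lt hfH hgH hnew
  have hgmem := IH (mu G g) (lt_of_lt_of_le hlt hmu) g le_rfl hgconj hgcong
  have hfg : f = g + m • v := by rw [hg, sub_add_cancel]
  rw [hfg]
  exact add_mem hgmem (zsmul_mem hvmem m)


/-- For a finite group `G`, a conjugation-invariant integer-valued function
`f` on the subgroups of `G` (i.e. an element of `∏_{(H)} ℤ`) lies in the image of the mark
homomorphism `φ : A(G) → ∏_{(H)} ℤ` (here: lies in the subring `A(G) ≤ ∏_{H} ℤ`) if and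
only if for every subgroup `H` of `G`:
`Σ_C n_{C/H} · f(C) ≡ 0 mod |N_G(H)/H|`, where the sum runs over subgroups `C` with
`H ◁ C` and `C/H` cyclic (expressed as: `C` is generated by `H` together with one element),
and `n_{C/H}` is the number of generators of the cyclic group `C/H`, i.e. the totient of
`|C/H| = [C : H]`. -/
theorem burnside_image_congruences (G : Type) [Group G] [Finite G]
    (f : Subgroup G → ℤ)
    (hconj : ∀ (g : G) (H : Subgroup G),
      f (Subgroup.map (MulAut.conj g).toMonoidHom H) = f H) :
    f ∈ BurnsideRing G ↔
      ∀ H : Subgroup G,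
        (Nat.card (Subgroup.normalizer (H : Set G) ⧸ H.subgroupOf (Subgroup.normalizer (H : Set G))) : ℤ) ∣
          ∑ᶠ C ∈ {C : Subgroup G | H ≤ C ∧ (H.subgroupOf C).Normal ∧
              ∃ c ∈ C, C = H ⊔ Subgroup.zpowers c},
            (Nat.totient (H.relIndex C) : ℤ) * f C := by
  constructor
  · intro hf H
    exact forward_dvd G hf H
  · intro hcong
    exact backward_aux G (mu G f) f le_rfl hconj hcong
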